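/- Let δ ∈ (0,1], ε > 0, let G = (V,E) be a connected simple graph on n vertices with minimal degree at least δn, and let V = V₁ ⊔ … ⊔ V_k be an (ε,δ,n^{1.5})-good decomposition of G with parameter θ satisfying θε⁸√n > 1. Then there exists C = C(δ) < ∞ such that for any i ∈ [k] there exists a set V_i′ ⊆ V_i with |V_i′| ≥ δ⁴n/80 such that for every v ∈ V_i′, the random walk on the network G^ρ started at v satisfies P_v(τ_ρ < τ_{V∖V_i}) ≥ 1 − Cε², where τ_A denotes the hitting time of A. -/

import Mathlib

open scoped Classical

noncomputable section

namespace Paper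

variable {V : Type} [Fintype V]

/-- The degree of a vertex `v` in a simple graph `G`. -/
def deg (G : SimpleGraph V) (v : V) : ℕ := Nat.card {u | G.Adj v u}

/-- The transition matrix of the simple random walk on `G`. -/
def transMat (G : SimpleGraph V) : Matrix V V ℝ :=
  fun v u => if G.Adj v u then (deg G v : ℝ)⁻¹ else 0

/-- Rayleigh quotients of `P` over unit functions orthogonal to constants in `L²(m)`;
its supremum is the second largest eigenvalue `λ₂`. -/
def rayleigh (P : Matrix V V ℝ) (m : V → ℝ) : Set ℝ :=
  {r | ∃ f : V → ℝ, (∑ v, m v * f v) = 0 ∧ (∑ v, m v * f v ^ 2) = 1 ∧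
       r = ∑ v, m v * f v * (∑ u, P v u * f u)}

/-- The spectral gap `1 - λ₂` of `P`. -/
def matGap (P : Matrix V V ℝ) (m : V → ℝ) : ℝ := 1 - sSup (rayleigh P m)

/-- The spectral gap `γ(G) = 1 - λ₂` of the simple random walk on `G`. -/
def gap (G : SimpleGraph V) : ℝ := matGap (transMat G) fun v => (deg G v : ℝ)

/-- The number of edges between `v` and the set `S`. -/
def degIn (G : SimpleGraph V) (v : V) (S : Finset V) : ℕ :=
  (S.filter fun u => G.Adj v u).card

/-- The number of edges of `G` between the (disjoint) vertex sets `A` and `B`. -/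
def eBetween (G : SimpleGraph V) (A B : Finset V) : ℕ :=
  ((A ×ˢ B).filter fun p => G.Adj p.1 p.2).card

/-- `Vs` is a partition of the vertex set into (nonempty) sets. -/
def IsPartition {k : ℕ} (Vs : Fin k → Finset V) : Prop :=
  (∀ v : V, ∃! i, v ∈ Vs i) ∧ ∀ i, (Vs i).Nonempty

/-- `Vs` is an `(ε,δ,β)`-good decomposition of `G`, with parameter `θ`. -/
def IsGoodDecompositionWith [DecidableEq V] (G : SimpleGraph V) (ε δ β : ℝ) {k : ℕ}
    (Vs : Fin k → Finset V) (θ : ℝ) : Prop :=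
  IsPartition Vs ∧
  ε ^ ((11 : ℝ) * (2 : ℝ) ^ ((2 : ℝ) / δ)) ≤ θ ∧ θ ≤ ε ∧
  (k : ℝ) ≤ 2 / δ ∧
  (∀ i, δ * (Fintype.card V : ℝ) / 2 ≤ ((Vs i).card : ℝ)) ∧
  (∀ i, δ ^ 15 * θ * β / (2 ^ 31 * (Fintype.card V : ℝ) ^ 2) ≤
      gap (G.induce (↑(Vs i) : Set V))) ∧
  (∀ i, ∀ v ∈ Vs i, δ ^ 4 * (Fintype.card V : ℝ) / 40 ≤ (degIn G v (Vs i) : ℝ)) ∧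
  (∀ i, (eBetween G (Vs i) (Vs i)ᶜ : ℝ) ≤ ε ^ 9 * θ ^ 2 * β)

/-- One-step transition probabilities of the random walk on the network `G^ρ` (state
space `Option V`, where `none` is the added vertex `ρ`), from a vertex `v ∈ V`: the walk
moves to `ρ` with probability `q = θε⁴/√n` and to each neighbour of `v` in `G` with
probability `(1-q)/deg(v)` (this is the walk on `G` with edge weights `1` and
`w(v,ρ) = θε⁴ deg(v)/(√n - θε⁴)`). -/
def rhoStep (G : SimpleGraph V) (q : ℝ) (v : V) : Option V → ℝ
  | none => q
  | some u => if G.Adj v u then (1 - q) / (deg G v : ℝ) else 0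

/-- The probability of a given finite trajectory of the walk on `G^ρ`. -/
def chainProb (G : SimpleGraph V) (q : ℝ) : List (Option V) → ℝ
  | [] => 1
  | [_] => 1
  | none :: _ :: _ => 0
  | some v :: y :: l => rhoStep G q v y * chainProb G q (y :: l)

/-! ### Auxiliary machinery for Claim 3.7 -/

section Aux

variable [DecidableEq V] (G : SimpleGraph V) (S : Finset V)

lemma deg_eq_card (v : V) :
    deg G v = (Finset.univ.filter fun u => G.Adj v u).card := by
  have h : {u | G.Adj v u} = ↑(Finset.univ.filter fun u => G.Adj v u) := by
    ext u; simp
  rw [deg, h, Nat.card_coe_set_eq, Set.ncard_coe_finset]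

/-- Probability that the simple random walk on `G` started at `v` stays in `S`
for `t` steps. -/
def stay : ℕ → V → ℝ
  | 0, _ => 1
  | t + 1, v => (deg G v : ℝ)⁻¹ * ∑ u ∈ S.filter (fun u => G.Adj v u), stay t u

/-- Probability that the simple random walk on `G` started at `v` leaves `S` for the
first time exactly at step `m`. -/
def exitP : ℕ → V → ℝ
  | 0, _ => 0
  | m + 1, v => (deg G v : ℝ)⁻¹ * ∑ u ∈ Finset.univ.filter (fun u => G.Adj v u),
      (if u ∈ S then exitP m u else if m = 0 then 1 else 0)

lemma stay_nonneg : ∀ (t : ℕ) (v : V), 0 ≤ stay G S t v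
  | 0, _ => zero_le_one
  | t + 1, v => mul_nonneg (by positivity)
      (Finset.sum_nonneg fun u _ => stay_nonneg t u)

lemma stay_le_one : ∀ (t : ℕ) (v : V), stay G S t v ≤ 1
  | 0, _ => le_refl 1
  | t + 1, v => by
    rcases eq_or_lt_of_le (Nat.zero_le (deg G v)) with hd | hd
    · show (deg G v : ℝ)⁻¹ * _ ≤ 1
      rw [← hd]; norm_num
    · have hd' : (0 : ℝ) < (deg G v : ℝ) := by exact_mod_cast hd
      show (deg G v : ℝ)⁻¹ * _ ≤ 1
      rw [inv_mul_le_one₀ hd']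
      calc ∑ u ∈ S.filter (fun u => G.Adj v u), stay G S t u
          ≤ ∑ _u ∈ S.filter (fun u => G.Adj v u), (1 : ℝ) :=
            Finset.sum_le_sum fun u _ => stay_le_one t u
        _ = ((S.filter (fun u => G.Adj v u)).card : ℝ) := by simp
        _ ≤ (deg G v : ℝ) := by
            rw [deg_eq_card]
            exact_mod_cast Finset.card_le_card
              (Finset.filter_subset_filter _ (Finset.subset_univ S))

lemma exitP_nonneg : ∀ (m : ℕ) (v : V), 0 ≤ exitP G S m v
  | 0, _ => le_refl 0
  | m + 1, v => mul_nonneg (by positivity) <| Finset.sum_nonneg fun u _ => by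
      by_cases hu : u ∈ S
      · simpa [hu] using exitP_nonneg m u
      · by_cases hm : m = 0 <;> simp [hu, hm]

lemma stay_add_sum_exitP (hdeg : ∀ v : V, 0 < deg G v) :
    ∀ (t : ℕ) (v : V), stay G S t v + ∑ m ∈ Finset.range (t + 1), exitP G S m v = 1 := by
  intro t
  induction t with
  | zero => intro v; simp [stay, exitP]
  | succ t ih =>
    intro v
    have hd' : (0 : ℝ) < (deg G v : ℝ) := by exact_mod_cast hdeg v
    have hne : (deg G v : ℝ) ≠ 0 := ne_of_gt hd'
    have hshift : ∑ m ∈ Finset.range (t + 2), exitP G S m v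
        = ∑ m ∈ Finset.range (t + 1), exitP G S (m + 1) v := by
      rw [Finset.sum_range_succ']
      simp [exitP]
    have hswap : ∑ m ∈ Finset.range (t + 1), exitP G S (m + 1) v
        = (deg G v : ℝ)⁻¹ * ∑ u ∈ Finset.univ.filter (fun u => G.Adj v u),
            ∑ m ∈ Finset.range (t + 1),
              (if u ∈ S then exitP G S m u else if m = 0 then 1 else 0) := by
      simp only [exitP]
      rw [← Finset.mul_sum, Finset.sum_comm]
    have hinner : ∀ u, ∑ m ∈ Finset.range (t + 1),
        (if u ∈ S then exitP G S m u else if m = 0 then 1 else 0)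
        = if u ∈ S then 1 - stay G S t u else 1 := by
      intro u
      by_cases hu : u ∈ S
      · simp only [hu, if_true]
        have := ih u
        linarith
      · simp only [hu, if_false]
        rw [Finset.sum_ite_eq' (Finset.range (t + 1)) 0 (fun _ => (1 : ℝ))]
        simp
    have hsplit : ∑ u ∈ Finset.univ.filter (fun u => G.Adj v u),
        (if u ∈ S then 1 - stay G S t u else 1)
        = (deg G v : ℝ) - ∑ u ∈ S.filter (fun u => G.Adj v u), stay G S t u := by
      have h1 : ∀ u, (if u ∈ S then 1 - stay G S t u else (1 : ℝ))
          = 1 - (if u ∈ S then stay G S t u else 0) := by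
        intro u; by_cases hu : u ∈ S <;> simp [hu]
      simp only [h1]
      rw [Finset.sum_sub_distrib]
      congr 1
      · rw [Finset.sum_const, deg_eq_card]; simp
      · rw [← Finset.sum_filter]
        apply Finset.sum_congr _ (fun _ _ => rfl)
        ext u
        simp [and_comm]
    show stay G S (t + 1) v + ∑ m ∈ Finset.range (t + 1 + 1), exitP G S m v = 1
    rw [hshift, hswap]
    simp only [hinner]
    rw [hsplit]
    show (deg G v : ℝ)⁻¹ * ∑ u ∈ S.filter (fun u => G.Adj v u), stay G S t u
        + (deg G v : ℝ)⁻¹ * ((deg G v : ℝ) - ∑ u ∈ S.filter (fun u => G.Adj v u), stay G S t u) = 1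
    field_simp
    ring

lemma eBetween_eq_sum :
    (eBetween G S Sᶜ : ℝ) = ∑ v ∈ S, ((Sᶜ.filter fun u => G.Adj v u).card : ℝ) := by
  have h : ((S ×ˢ Sᶜ).filter fun p => G.Adj p.1 p.2).card
      = ∑ v ∈ S, (Sᶜ.filter fun u => G.Adj v u).card := by
    rw [Finset.card_filter, Finset.sum_product]
    exact Finset.sum_congr rfl fun v _ => (Finset.card_filter _ _).symm
  rw [eBetween, h]
  push_cast
  rfl

lemma sum_deg_exitP_le (hdeg : ∀ v : V, 0 < deg G v) :
    ∀ m : ℕ, ∑ v ∈ S, (deg G v : ℝ) * exitP G S m v ≤ (eBetween G S Sᶜ : ℝ) := by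
  intro m
  induction m with
  | zero => simp [exitP]
  | succ m ih =>
    have hstep : ∀ v : V, (deg G v : ℝ) * exitP G S (m + 1) v
        = ∑ u ∈ Finset.univ.filter (fun u => G.Adj v u),
            (if u ∈ S then exitP G S m u else if m = 0 then 1 else 0) := by
      intro v
      have hne : (deg G v : ℝ) ≠ 0 := by
        have := hdeg v; positivity
      show (deg G v : ℝ) * ((deg G v : ℝ)⁻¹ * _) = _
      rw [← mul_assoc, mul_inv_cancel₀ hne, one_mul]
    simp only [hstep]
    have hsplitv : ∀ v : V, ∑ u ∈ Finset.univ.filter (fun u => G.Adj v u),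
        (if u ∈ S then exitP G S m u else if m = 0 then 1 else 0)
        = (∑ u ∈ S.filter (fun u => G.Adj v u), exitP G S m u)
          + (if m = 0 then ((Sᶜ.filter fun u => G.Adj v u).card : ℝ) else 0) := by
      intro v
      rw [Finset.sum_ite]
      congr 1
      · apply Finset.sum_congr _ (fun _ _ => rfl)
        ext u; simp [and_comm]
      · have hfe : (Finset.univ.filter (fun u => G.Adj v u)).filter (fun u => ¬ u ∈ S)
            = Sᶜ.filter fun u => G.Adj v u := by
          ext u; simp [and_comm]
        rw [hfe, Finset.sum_const]
        by_cases hm : m = 0 <;> simp [hm]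
    simp only [hsplitv]
    rw [Finset.sum_add_distrib]
    have hT1 : ∑ v ∈ S, ∑ u ∈ S.filter (fun u => G.Adj v u), exitP G S m u
        ≤ if m = 0 then 0 else (eBetween G S Sᶜ : ℝ) := by
      have h1 : ∀ v ∈ S, ∑ u ∈ S.filter (fun u => G.Adj v u), exitP G S m u
          = ∑ u ∈ S, (if G.Adj v u then exitP G S m u else 0) := by
        intro v _; rw [Finset.sum_filter]
      rw [Finset.sum_congr rfl h1, Finset.sum_comm]
      by_cases hm : m = 0
      · simp [hm, exitP]
      · simp only [hm, if_false]
        have h2 : ∀ u ∈ S, ∑ v ∈ S, (if G.Adj v u then exitP G S m u else 0)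
            ≤ (deg G u : ℝ) * exitP G S m u := by
          intro u _
          rw [← Finset.sum_filter, Finset.sum_const, nsmul_eq_mul]
          apply mul_le_mul_of_nonneg_right _ (exitP_nonneg G S m u)
          have hsub : S.filter (fun v => G.Adj v u) ⊆ Finset.univ.filter fun v => G.Adj u v := by
            intro v hv
            simp only [Finset.mem_filter, Finset.mem_univ, true_and] at hv ⊢
            exact hv.2.symm
          rw [deg_eq_card]
          exact_mod_cast Finset.card_le_card hsub
        exact le_trans (Finset.sum_le_sum h2) ih
    have hT2 : ∑ _v ∈ S, (if m = 0 then ((Sᶜ.filter fun u => G.Adj _v u).card : ℝ) else 0)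
        ≤ if m = 0 then (eBetween G S Sᶜ : ℝ) else 0 := by
      by_cases hm : m = 0
      · simp only [hm, if_true]
        rw [eBetween_eq_sum]
      · simp [hm]
    calc _ ≤ (if m = 0 then 0 else (eBetween G S Sᶜ : ℝ))
            + (if m = 0 then (eBetween G S Sᶜ : ℝ) else 0) := add_le_add hT1 hT2
      _ = (eBetween G S Sᶜ : ℝ) := by by_cases hm : m = 0 <;> simp [hm]

variable (q : ℝ)

/-- The summand of the tsum in Claim 3.7. -/
def gfun (v : V) (l : List V) : ℝ :=
  if l.head? = some v ∧ ∀ u ∈ l, u ∈ S then chainProb G q (l.map some ++ [none]) else 0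

lemma rhoStep_nonneg (h0 : 0 ≤ q) (h1 : q ≤ 1) (v : V) (y : Option V) :
    0 ≤ rhoStep G q v y := by
  cases y with
  | none => simpa [rhoStep] using h0
  | some u =>
    by_cases h : G.Adj v u <;> simp [rhoStep, h]
    exact div_nonneg (by linarith) (Nat.cast_nonneg _)

lemma chainProb_nonneg (h0 : 0 ≤ q) (h1 : q ≤ 1) :
    ∀ l : List (Option V), 0 ≤ chainProb G q l
  | [] => by simp [chainProb]
  | [x] => by simp [chainProb]
  | none :: y :: l => by simp [chainProb]
  | some v :: y :: l => by
      have h := chainProb_nonneg h0 h1 (y :: l)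
      have h2 := rhoStep_nonneg G q h0 h1 v y
      simpa [chainProb] using mul_nonneg h2 h

lemma gfun_nonneg (h0 : 0 ≤ q) (h1 : q ≤ 1) (v : V) (l : List V) :
    0 ≤ gfun G S q v l := by
  unfold gfun
  split_ifs
  · exact chainProb_nonneg G q h0 h1 _
  · exact le_refl 0

lemma gfun_nil (v : V) : gfun G S q v [] = 0 := by simp [gfun]

lemma gfun_single (v : V) (hv : v ∈ S) : gfun G S q v [v] = q := by
  simp [gfun, hv, chainProb, rhoStep]

lemma gfun_cons_zero (v x : V) (l : List V) (h : x ≠ v ∨ v ∉ S) :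
    gfun G S q v (x :: l) = 0 := by
  unfold gfun
  rw [if_neg]
  rintro ⟨h1, h2⟩
  simp only [List.head?_cons, Option.some.injEq] at h1
  rcases h with h | h
  · exact h h1
  · exact h (h1 ▸ h2 x List.mem_cons_self)

lemma gfun_cons (v x : V) (l : List V) :
    gfun G S q v (v :: x :: l)
      = (if v ∈ S ∧ x ∈ S then rhoStep G q v (some x) else 0) * gfun G S q x (x :: l) := by
  by_cases hv : v ∈ S
  · by_cases hx : x ∈ S
    · by_cases hl : ∀ u ∈ l, u ∈ S
      · simp [gfun, hv, hx, hl, chainProb]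
      · simp [gfun, hv, hx, hl]
    · simp [gfun, hv, hx]
  · simp [gfun, hv]

lemma sum_tuple : ∀ (t : ℕ) (v : V), v ∈ S →
    (∑ u : Fin t → V, gfun G S q v (v :: List.ofFn u))
      = q * (1 - q) ^ t * stay G S t v := by
  intro t
  induction t with
  | zero =>
    intro v hv
    have h : ∀ u : Fin 0 → V, gfun G S q v (v :: List.ofFn u) = q := by
      intro u
      rw [show List.ofFn u = [] from List.ofFn_zero]
      exact gfun_single G S q v hv
    rw [Finset.sum_congr rfl (fun u _ => h u), Finset.sum_const]
    simp [stay]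
  | succ t ih =>
    intro v hv
    have hofn : ∀ (x : V) (u : Fin t → V),
        List.ofFn (Fin.cons x u : Fin (t + 1) → V) = x :: List.ofFn u := by
      intro x u
      rw [List.ofFn_succ]
      simp
    have hstep : (∑ u : Fin (t + 1) → V, gfun G S q v (v :: List.ofFn u))
        = ∑ p : V × (Fin t → V), gfun G S q v (v :: p.1 :: List.ofFn p.2) := by
      rw [← Equiv.sum_comp (Fin.consEquiv (fun _ : Fin (t + 1) => V))
        (fun u => gfun G S q v (v :: List.ofFn u))]
      apply Finset.sum_congr rfl
      intro p _
      congr 1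
      rw [show (Fin.consEquiv (fun _ : Fin (t + 1) => V)) p = Fin.cons p.1 p.2 from rfl]
      rw [hofn p.1 p.2]
    rw [hstep, Fintype.sum_prod_type]
    have hinner : ∀ x : V, (∑ u : Fin t → V, gfun G S q v (v :: x :: List.ofFn u))
        = if x ∈ S then rhoStep G q v (some x) * (q * (1 - q) ^ t * stay G S t x) else 0 := by
      intro x
      by_cases hx : x ∈ S
      · simp only [hx, if_true]
        have h1 : ∀ u : Fin t → V, gfun G S q v (v :: x :: List.ofFn u)
            = rhoStep G q v (some x) * gfun G S q x (x :: List.ofFn u) := by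
          intro u
          rw [gfun_cons, if_pos ⟨hv, hx⟩]
        rw [Finset.sum_congr rfl (fun u _ => h1 u), ← Finset.mul_sum, ih x hx]
      · simp only [hx, if_false]
        apply Finset.sum_eq_zero
        intro u _
        rw [gfun_cons, if_neg (by tauto), zero_mul]
    rw [Finset.sum_congr rfl (fun x _ => hinner x)]
    rw [Finset.sum_ite_mem, Finset.univ_inter]
    have hterm : ∀ x ∈ S, rhoStep G q v (some x) * (q * (1 - q) ^ t * stay G S t x)
        = (if G.Adj v x then (q * (1 - q) ^ (t + 1) * (deg G v : ℝ)⁻¹) * stay G S t x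
            else 0) := by
      intro x _
      by_cases ha : G.Adj v x
      · simp only [rhoStep, ha, if_true]
        rw [div_eq_mul_inv]
        ring
      · simp [rhoStep, ha]
    rw [Finset.sum_congr rfl hterm, ← Finset.sum_filter, ← Finset.mul_sum]
    show q * (1 - q) ^ (t + 1) * (deg G v : ℝ)⁻¹ * _ = q * (1 - q) ^ (t + 1) * stay G S (t + 1) v
    rw [show stay G S (t + 1) v
        = (deg G v : ℝ)⁻¹ * ∑ u ∈ S.filter (fun u => G.Adj v u), stay G S t u from rfl]
    ring

/-- The finite set of lists of length `t+1`. -/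
def Lset (t : ℕ) : Finset (List V) :=
  Finset.image (fun p : V × (Fin t → V) => p.1 :: List.ofFn p.2) Finset.univ

lemma Lset_inj (t : ℕ) :
    Function.Injective (fun p : V × (Fin t → V) => p.1 :: List.ofFn p.2) := by
  rintro ⟨a, u⟩ ⟨b, w⟩ h
  simp only [List.cons.injEq] at h
  exact Prod.ext h.1 (List.ofFn_injective h.2)

lemma length_of_mem_Lset {t : ℕ} {l : List V} (h : l ∈ Lset t) : l.length = t + 1 := by
  simp only [Lset, Finset.mem_image] at h
  obtain ⟨p, _, rfl⟩ := h
  simp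

lemma mem_Lset (a : V) (r : List V) : (a :: r) ∈ Lset r.length := by
  simp only [Lset, Finset.mem_image]
  exact ⟨(a, fun i => r.get i), Finset.mem_univ _, by rw [List.ofFn_get]⟩

lemma sum_Lset (t : ℕ) (v : V) :
    ∑ l ∈ Lset (V := V) t, gfun G S q v l
      = ∑ p : V × (Fin t → V), gfun G S q v (p.1 :: List.ofFn p.2) := by
  rw [Lset, Finset.sum_image (fun a _ b _ h => Lset_inj t h)]

lemma sum_Lset_eq (t : ℕ) (v : V) (hv : v ∈ S) :
    ∑ l ∈ Lset (V := V) t, gfun G S q v l = q * (1 - q) ^ t * stay G S t v := by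
  rw [sum_Lset, Fintype.sum_prod_type]
  have h : ∀ x : V, (∑ u : Fin t → V, gfun G S q v (x :: List.ofFn u))
      = if x = v then q * (1 - q) ^ t * stay G S t v else 0 := by
    intro x
    by_cases hx : x = v
    · subst hx; simp only [if_true]; exact sum_tuple G S q t x hv
    · simp only [hx, if_false]
      exact Finset.sum_eq_zero fun u _ => gfun_cons_zero G S q v x _ (Or.inl hx)
  rw [Finset.sum_congr rfl (fun x _ => h x), Finset.sum_ite_eq' Finset.univ v]
  simp

lemma sum_Lset_le (h0 : 0 ≤ q) (h1 : q ≤ 1) (t : ℕ) (v : V) :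
    ∑ l ∈ Lset (V := V) t, gfun G S q v l ≤ q * (1 - q) ^ t := by
  by_cases hv : v ∈ S
  · rw [sum_Lset_eq G S q t v hv]
    have hs1 := stay_le_one G S t v
    have hs0 := stay_nonneg G S t v
    have hpos : 0 ≤ q * (1 - q) ^ t := by
      apply mul_nonneg h0 (pow_nonneg (by linarith) t)
    nlinarith
  · have h : ∀ l ∈ Lset (V := V) t, gfun G S q v l = 0 := by
      intro l hl
      simp only [Lset, Finset.mem_image] at hl
      obtain ⟨p, _, rfl⟩ := hl
      by_cases hx : p.1 = v
      · exact gfun_cons_zero G S q v p.1 _ (Or.inr hv)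
      · exact gfun_cons_zero G S q v p.1 _ (Or.inl hx)
    rw [Finset.sum_congr rfl h]
    simp
    apply mul_nonneg h0 (pow_nonneg (by linarith) t)

lemma geom_mul_eq (K : ℕ) : q * ∑ t ∈ Finset.range K, (1 - q) ^ t = 1 - (1 - q) ^ K := by
  have h := geom_sum_mul (1 - q) K
  linear_combination -h

lemma Lset_disj : ∀ t t' : ℕ, t ≠ t' → Disjoint (Lset (V := V) t) (Lset (V := V) t') := by
  intro t t' h
  rw [Finset.disjoint_left]
  intro l hl hl'
  exact h (by
    have h1 := length_of_mem_Lset (V := V) hl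
    have h2 := length_of_mem_Lset (V := V) hl'
    omega)

lemma sum_biUnion_Lset (N : ℕ) (f : List V → ℝ) :
    ∑ l ∈ (Finset.range N).biUnion (Lset (V := V)), f l
      = ∑ t ∈ Finset.range N, ∑ l ∈ Lset (V := V) t, f l :=
  Finset.sum_biUnion (fun t _ t' _ h => Lset_disj t t' h)

lemma summable_gfun (h0 : 0 ≤ q) (h1 : q ≤ 1) (v : V) :
    Summable (gfun G S q v) := by
  apply summable_of_sum_le (c := 1) (fun l => gfun_nonneg G S q h0 h1 v l)
  intro s
  set T := s.sup List.length with hT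
  have hsub : s ⊆ insert [] ((Finset.range T).biUnion (Lset (V := V))) := by
    intro l hl
    match l with
    | [] => exact Finset.mem_insert_self _ _
    | a :: r =>
      apply Finset.mem_insert_of_mem
      rw [Finset.mem_biUnion]
      refine ⟨r.length, ?_, mem_Lset a r⟩
      rw [Finset.mem_range]
      have := Finset.le_sup (f := List.length) hl
      simp only [List.length_cons] at this
      omega
  calc ∑ l ∈ s, gfun G S q v l
      ≤ ∑ l ∈ insert [] ((Finset.range T).biUnion (Lset (V := V))), gfun G S q v l := by
        apply Finset.sum_le_sum_of_subset_of_nonneg hsub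
        intro l _ _
        exact gfun_nonneg G S q h0 h1 v l
    _ = gfun G S q v [] + ∑ l ∈ (Finset.range T).biUnion (Lset (V := V)), gfun G S q v l := by
        rw [Finset.sum_insert]
        intro h
        rw [Finset.mem_biUnion] at h
        obtain ⟨t, _, ht⟩ := h
        have := length_of_mem_Lset (V := V) ht
        simp at this
    _ ≤ 0 + ∑ t ∈ Finset.range T, (q * (1 - q) ^ t) := by
        rw [gfun_nil, sum_biUnion_Lset]
        exact add_le_add (le_refl 0)
          (Finset.sum_le_sum fun t _ => sum_Lset_le G S q h0 h1 t v)
    _ ≤ 1 := by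
        rw [zero_add, ← Finset.mul_sum, geom_mul_eq]
        have : (0 : ℝ) ≤ (1 - q) ^ T := pow_nonneg (by linarith) T
        linarith

end Aux

set_option maxHeartbeats 1000000 in
/-- **Claim 3.7.**  For any `δ ∈ (0,1]` there is `C = C(δ) < ∞` such that the following
holds.  Let `V = V₁ ⊔ … ⊔ V_k` be an `(ε,δ,n^{1.5})`-good decomposition with parameter
`θ` (with `θ ε⁸ √n > 1`) of a connected simple graph `G` with minimal degree `≥ δn`.
For every `i` there is a set `V_i' ⊆ V_i` with `|V_i'| ≥ δ⁴n/80` such that for every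
`v ∈ V_i'` the walk on `G^ρ` started at `v` hits `ρ` before leaving `V_i` with
probability at least `1 - Cε²`  (the probability `P_v(τ_ρ < τ_{V∖V_i})` is written as
the sum, over trajectories staying in `V_i` and then jumping to `ρ`, of their
probabilities). -/
theorem hit_rho_before_leaving (δ : ℝ) (hδ : δ ∈ Set.Ioc (0 : ℝ) 1) :
    ∃ C : ℝ, 0 < C ∧
      ∀ (V : Type) [Fintype V] [DecidableEq V] (G : SimpleGraph V), G.Connected →
        ∀ ε θ : ℝ, 0 < ε →
        (∀ v : V, δ * (Fintype.card V : ℝ) ≤ (deg G v : ℝ)) →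
        ∀ (k : ℕ) (Vs : Fin k → Finset V),
          IsGoodDecompositionWith G ε δ ((Fintype.card V : ℝ) ^ ((3 : ℝ) / 2)) Vs θ →
          1 < θ * ε ^ 8 * Real.sqrt (Fintype.card V) →
          ∀ i : Fin k, ∃ V' : Finset V, V' ⊆ Vs i ∧
            δ ^ 4 * (Fintype.card V : ℝ) / 80 ≤ (V'.card : ℝ) ∧
            ∀ v ∈ V',
              1 - C * ε ^ 2 ≤
                ∑' l : List V,
                  if l.head? = some v ∧ ∀ u ∈ l, u ∈ Vs i then
                    chainProb G (θ * ε ^ 4 / Real.sqrt (Fintype.card V))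
                      (l.map some ++ [none])
                  else 0 := by
  obtain ⟨hδ0, hδ1⟩ := hδ
  refine ⟨4 / δ ^ 2, by positivity, ?_⟩
  intro V _ _ G _hconn ε θ hε hdeg k Vs hgood _hθn i
  obtain ⟨⟨hpart1, hpart2⟩, hθlb, hθub, _hk, hcard, _hgap, _hdegIn, hcut⟩ := hgood
  set n : ℝ := (Fintype.card V : ℝ) with hn
  -- basic facts
  have hn1 : (1 : ℝ) ≤ n := by
    obtain ⟨v0, _⟩ := hpart2 i
    haveI : Nonempty V := ⟨v0⟩
    have h1 : 1 ≤ Fintype.card V := Fintype.card_pos (α := V)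
    rw [hn]
    exact_mod_cast h1
  have hn0 : (0 : ℝ) < n := by linarith
  have hsqrt1 : (1 : ℝ) ≤ Real.sqrt n := by
    rw [show (1 : ℝ) = Real.sqrt 1 from (Real.sqrt_one).symm]
    exact Real.sqrt_le_sqrt hn1
  have hsqrt0 : (0 : ℝ) < Real.sqrt n := by linarith
  have hθ0 : 0 < θ :=
    lt_of_lt_of_le (Real.rpow_pos_of_pos hε _) hθlb
  -- ε ≤ 1
  have hε1 : ε ≤ 1 := by
    by_contra h
    push_neg at h
    have hb : (1 : ℝ) < 11 * (2 : ℝ) ^ ((2 : ℝ) / δ) := by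
      have h2 : (1 : ℝ) ≤ (2 : ℝ) ^ ((2 : ℝ) / δ) :=
        Real.one_le_rpow (by norm_num) (by positivity)
      nlinarith
    have : ε < ε ^ ((11 : ℝ) * (2 : ℝ) ^ ((2 : ℝ) / δ)) := by
      calc ε = ε ^ (1 : ℝ) := (Real.rpow_one ε).symm
        _ < ε ^ ((11 : ℝ) * (2 : ℝ) ^ ((2 : ℝ) / δ)) :=
          Real.rpow_lt_rpow_of_exponent_lt h hb
    linarith
  set q : ℝ := θ * ε ^ 4 / Real.sqrt n with hqdef
  have hq0 : 0 < q := by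
    apply div_pos _ hsqrt0
    positivity
  have hq1 : q ≤ 1 := by
    rw [hqdef, div_le_one hsqrt0]
    have hε4 : ε ^ 4 ≤ 1 := pow_le_one₀ (le_of_lt hε) hε1
    nlinarith
  have hx0 : (0 : ℝ) ≤ 1 - q := by linarith
  have hx1 : 1 - q < 1 := by linarith
  -- degrees are positive
  have hdegpos : ∀ v : V, 0 < deg G v := by
    intro v
    have h := hdeg v
    have : (0 : ℝ) < (deg G v : ℝ) := lt_of_lt_of_le (by nlinarith) h
    exact_mod_cast this
  set S : Finset V := Vs i with hS
  have hScard : δ * n / 2 ≤ (S.card : ℝ) := hcard i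
  set e : ℝ := (eBetween G S Sᶜ : ℝ) with he
  have he0 : 0 ≤ e := Nat.cast_nonneg _
  have hecut : e ≤ ε ^ 9 * θ ^ 2 * (n * Real.sqrt n) := by
    have h32 : n ^ ((3 : ℝ) / 2) = n * Real.sqrt n := by
      rw [Real.sqrt_eq_rpow, show (3 : ℝ) / 2 = 1 + 1 / 2 by norm_num,
        Real.rpow_add hn0, Real.rpow_one]
    have := hcut i
    rw [h32] at this
    exact this
  -- the exit-weight function
  set EL : ℕ → V → ℝ := fun L v => ∑ m ∈ Finset.range (L + 1), (1 - q) ^ m * exitP G S m v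
    with hEL
  have hELnonneg : ∀ L v, 0 ≤ EL L v := by
    intro L v
    apply Finset.sum_nonneg
    intro m _
    exact mul_nonneg (pow_nonneg hx0 m) (exitP_nonneg G S m v)
  have hELmono : ∀ L L' v, L ≤ L' → EL L v ≤ EL L' v := by
    intro L L' v h
    apply Finset.sum_le_sum_of_subset_of_nonneg
    · exact Finset.range_subset_range.mpr (by omega)
    · intro m _ _
      exact mul_nonneg (pow_nonneg hx0 m) (exitP_nonneg G S m v)
  -- averaged bound
  have hbound : ∀ L : ℕ, q * ∑ v ∈ S, (deg G v : ℝ) * EL L v ≤ e := by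
    intro L
    have h1 : ∑ v ∈ S, (deg G v : ℝ) * EL L v
        = ∑ m ∈ Finset.range (L + 1), (1 - q) ^ m
            * ∑ v ∈ S, (deg G v : ℝ) * exitP G S m v := by
      rw [hEL]
      have hms : ∀ v : V, (deg G v : ℝ) * ∑ m ∈ Finset.range (L + 1), (1 - q) ^ m * exitP G S m v
          = ∑ m ∈ Finset.range (L + 1), (deg G v : ℝ) * ((1 - q) ^ m * exitP G S m v) :=
        fun v => Finset.mul_sum _ _ _
      rw [Finset.sum_congr rfl fun v _ => hms v, Finset.sum_comm]
      apply Finset.sum_congr rfl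
      intro m _
      rw [Finset.mul_sum]
      apply Finset.sum_congr rfl
      intro v _
      ring
    have h2 : ∑ v ∈ S, (deg G v : ℝ) * EL L v
        ≤ ∑ m ∈ Finset.range (L + 1), (1 - q) ^ m * e := by
      rw [h1]
      apply Finset.sum_le_sum
      intro m _
      have hle : ∑ v ∈ S, (deg G v : ℝ) * exitP G S m v ≤ e := by
        rw [he]; exact sum_deg_exitP_le G S hdegpos m
      exact mul_le_mul_of_nonneg_left hle (pow_nonneg hx0 m)
    have h3 : q * ∑ m ∈ Finset.range (L + 1), (1 - q) ^ m * e ≤ e := by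
      have h4 : ∑ m ∈ Finset.range (L + 1), (1 - q) ^ m * e
          = (∑ m ∈ Finset.range (L + 1), (1 - q) ^ m) * e := by
        rw [Finset.sum_mul]
      rw [h4, ← mul_assoc]
      have h5 := geom_mul_eq q (L + 1)
      have h6 : q * ∑ m ∈ Finset.range (L + 1), (1 - q) ^ m ≤ 1 := by
        rw [h5]
        have : (0 : ℝ) ≤ (1 - q) ^ (L + 1) := pow_nonneg hx0 _
        linarith
      nlinarith
    calc q * ∑ v ∈ S, (deg G v : ℝ) * EL L v
        ≤ q * ∑ m ∈ Finset.range (L + 1), (1 - q) ^ m * e := by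
          apply mul_le_mul_of_nonneg_left h2 (le_of_lt hq0)
      _ ≤ e := h3
  -- the bad set
  set B : Finset V := S.filter (fun v => ∃ L : ℕ, ε ^ 2 < EL L v) with hB
  have hBS : B ⊆ S := Finset.filter_subset _ _
  -- bound on the size of the bad set
  have hBcard : (B.card : ℝ) * (ε ^ 2 * (δ * n)) * q ≤ e := by
    classical
    set Lc : V → ℕ := fun v => if h : ∃ L : ℕ, ε ^ 2 < EL L v then h.choose else 0 with hLc
    set Lstar : ℕ := B.sup Lc with hLstar
    have hgood : ∀ v ∈ B, ε ^ 2 < EL Lstar v := by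
      intro v hv
      have hex : ∃ L : ℕ, ε ^ 2 < EL L v := (Finset.mem_filter.mp hv).2
      have h1 : ε ^ 2 < EL (Lc v) v := by
        rw [hLc]
        simp only [dif_pos hex]
        exact hex.choose_spec
      have h2 : Lc v ≤ Lstar := Finset.le_sup hv
      exact lt_of_lt_of_le h1 (hELmono _ _ v h2)
    have h1 : (B.card : ℝ) * (ε ^ 2 * (δ * n)) ≤ ∑ v ∈ B, (deg G v : ℝ) * EL Lstar v := by
      have h2 : ∀ v ∈ B, ε ^ 2 * (δ * n) ≤ (deg G v : ℝ) * EL Lstar v := by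
        intro v hv
        have hd := hdeg v
        have hEv := hgood v hv
        have hε2 : (0 : ℝ) ≤ ε ^ 2 := sq_nonneg ε
        have hδn : (0 : ℝ) < δ * n := by positivity
        calc ε ^ 2 * (δ * n) = (δ * n) * ε ^ 2 := by ring
          _ ≤ (deg G v : ℝ) * EL Lstar v := by
              apply mul_le_mul hd (le_of_lt hEv) hε2
              linarith [hdeg v]
      calc (B.card : ℝ) * (ε ^ 2 * (δ * n)) = ∑ _v ∈ B, ε ^ 2 * (δ * n) := by
            rw [Finset.sum_const, nsmul_eq_mul]
        _ ≤ ∑ v ∈ B, (deg G v : ℝ) * EL Lstar v := Finset.sum_le_sum h2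
    have h3 : ∑ v ∈ B, (deg G v : ℝ) * EL Lstar v ≤ ∑ v ∈ S, (deg G v : ℝ) * EL Lstar v := by
      apply Finset.sum_le_sum_of_subset_of_nonneg hBS
      intro v _ _
      exact mul_nonneg (Nat.cast_nonneg _) (hELnonneg Lstar v)
    have h4 := hbound Lstar
    nlinarith
  -- numeric consequence
  by_cases hcase : ε ≤ δ / 2
  · -- main case: small ε
    refine ⟨S \ B, Finset.sdiff_subset, ?_, ?_⟩
    · -- cardinality bound
      have hq_mul : q * Real.sqrt n = θ * ε ^ 4 := div_mul_cancel₀ _ (ne_of_gt hsqrt0)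
      have hA : (B.card : ℝ) * (ε ^ 2 * (δ * n)) * (θ * ε ^ 4) ≤ ε ^ 9 * θ ^ 2 * (n * n) := by
        have h1 : (B.card : ℝ) * (ε ^ 2 * (δ * n)) * q * Real.sqrt n ≤ e * Real.sqrt n :=
          mul_le_mul_of_nonneg_right hBcard (le_of_lt hsqrt0)
        have h2 : e * Real.sqrt n ≤ ε ^ 9 * θ ^ 2 * (n * Real.sqrt n) * Real.sqrt n :=
          mul_le_mul_of_nonneg_right hecut (le_of_lt hsqrt0)
        have h3 : Real.sqrt n * Real.sqrt n = n := Real.mul_self_sqrt (le_of_lt hn0)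
        calc (B.card : ℝ) * (ε ^ 2 * (δ * n)) * (θ * ε ^ 4)
            = (B.card : ℝ) * (ε ^ 2 * (δ * n)) * (q * Real.sqrt n) := by rw [hq_mul]
          _ = (B.card : ℝ) * (ε ^ 2 * (δ * n)) * q * Real.sqrt n := by ring
          _ ≤ ε ^ 9 * θ ^ 2 * (n * Real.sqrt n) * Real.sqrt n := le_trans h1 h2
          _ = ε ^ 9 * θ ^ 2 * (n * (Real.sqrt n * Real.sqrt n)) := by ring
          _ = ε ^ 9 * θ ^ 2 * (n * n) := by rw [h3]
      have hBle : (B.card : ℝ) * δ ≤ ε ^ 3 * θ * n := by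
        have hpos : (0 : ℝ) < ε ^ 6 * θ * n := by positivity
        rw [← mul_le_mul_iff_of_pos_right hpos]
        calc (B.card : ℝ) * δ * (ε ^ 6 * θ * n)
            = (B.card : ℝ) * (ε ^ 2 * (δ * n)) * (θ * ε ^ 4) := by ring
          _ ≤ ε ^ 9 * θ ^ 2 * (n * n) := hA
          _ = ε ^ 3 * θ * n * (ε ^ 6 * θ * n) := by ring
      have hB16 : (B.card : ℝ) ≤ δ ^ 3 * n / 16 := by
        have hθε : ε ^ 3 * θ ≤ ε ^ 4 := by
          have h3 : (0 : ℝ) ≤ ε ^ 3 := by positivity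
          calc ε ^ 3 * θ ≤ ε ^ 3 * ε := mul_le_mul_of_nonneg_left hθub h3
            _ = ε ^ 4 := by ring
        have hε4 : ε ^ 4 ≤ (δ / 2) ^ 4 := by
          apply pow_le_pow_left₀ (le_of_lt hε) hcase
        have h1 : (B.card : ℝ) * δ ≤ (δ / 2) ^ 4 * n := by
          calc (B.card : ℝ) * δ ≤ ε ^ 3 * θ * n := hBle
            _ ≤ ε ^ 4 * n := mul_le_mul_of_nonneg_right hθε hn0.le
            _ ≤ (δ / 2) ^ 4 * n := mul_le_mul_of_nonneg_right hε4 hn0.le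
        have h2 : (δ / 2) ^ 4 * n = (δ ^ 3 * n / 16) * δ := by ring
        rw [h2] at h1
        exact le_of_mul_le_mul_right h1 hδ0
      have hcards : ((S \ B).card : ℝ) = (S.card : ℝ) - (B.card : ℝ) := by
        rw [Finset.card_sdiff_of_subset hBS]
        have := Finset.card_le_card hBS
        push_cast [Nat.cast_sub this]
        ring
      rw [hcards]
      have hkey : δ ^ 4 * n / 80 + δ ^ 3 * n / 16 ≤ δ * n / 2 := by
        nlinarith [mul_pos hδ0 hn0, sq_nonneg δ, mul_nonneg (mul_nonneg hδ0.le hδ0.le) hn0.le,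
          mul_nonneg (mul_nonneg (mul_nonneg hδ0.le hδ0.le) hδ0.le) hn0.le]
      linarith
    · -- probability bound for good vertices
      intro v hv
      have hvS : v ∈ S := (Finset.mem_sdiff.mp hv).1
      have hvB : v ∉ B := (Finset.mem_sdiff.mp hv).2
      have hvgood : ∀ L : ℕ, EL L v ≤ ε ^ 2 := by
        intro L
        by_contra h
        push_neg at h
        exact hvB (Finset.mem_filter.mpr ⟨hvS, ⟨L, h⟩⟩)
      have hsummable := summable_gfun G S q (le_of_lt hq0) hq1 v
      have htsum_eq : (∑' l : List V,
          if l.head? = some v ∧ ∀ u ∈ l, u ∈ Vs i then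
            chainProb G (θ * ε ^ 4 / Real.sqrt (Fintype.card V))
              (l.map some ++ [none]) else 0) = ∑' l : List V, gfun G S q v l := rfl
      rw [htsum_eq]
      -- for every L, the partial sum is at least 1 - (1-q)^(L+1) - ε²
      have hL : ∀ L : ℕ, 1 - (1 - q) ^ (L + 1) - ε ^ 2 ≤ ∑' l : List V, gfun G S q v l := by
        intro L
        have hpartial : ∑ l ∈ (Finset.range (L + 1)).biUnion (Lset (V := V)), gfun G S q v l
            ≤ ∑' l : List V, gfun G S q v l :=
          Summable.sum_le_tsum _ (fun l _ => gfun_nonneg G S q (le_of_lt hq0) hq1 v l) hsummable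
        have hsum1 : ∑ l ∈ (Finset.range (L + 1)).biUnion (Lset (V := V)), gfun G S q v l
            = ∑ t ∈ Finset.range (L + 1), q * (1 - q) ^ t * stay G S t v := by
          rw [sum_biUnion_Lset]
          exact Finset.sum_congr rfl fun t _ => sum_Lset_eq G S q t v hvS
        have hstay : ∀ t : ℕ, stay G S t v
            = 1 - ∑ m ∈ Finset.range (t + 1), exitP G S m v := by
          intro t
          have := stay_add_sum_exitP G S hdegpos t v
          linarith
        have hsum2 : ∑ t ∈ Finset.range (L + 1), q * (1 - q) ^ t * stay G S t v
            = (1 - (1 - q) ^ (L + 1))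
              - ∑ t ∈ Finset.range (L + 1), ∑ m ∈ Finset.range (t + 1),
                  q * (1 - q) ^ t * exitP G S m v := by
          have h1 : ∀ t ∈ Finset.range (L + 1), q * (1 - q) ^ t * stay G S t v
              = q * (1 - q) ^ t - ∑ m ∈ Finset.range (t + 1),
                  q * (1 - q) ^ t * exitP G S m v := by
            intro t _
            rw [hstay t, mul_sub, ← Finset.mul_sum]
            ring_nf
          rw [Finset.sum_congr rfl h1, Finset.sum_sub_distrib]
          congr 1
          have h2 : ∑ t ∈ Finset.range (L + 1), q * (1 - q) ^ t
              = q * ∑ t ∈ Finset.range (L + 1), (1 - q) ^ t := by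
            rw [Finset.mul_sum]
          rw [h2, geom_mul_eq]
        -- swap the double sum and bound it by EL
        have hswap : ∑ t ∈ Finset.range (L + 1), ∑ m ∈ Finset.range (t + 1),
              q * (1 - q) ^ t * exitP G S m v
            = ∑ m ∈ Finset.range (L + 1), ∑ t ∈ Finset.Ico m (L + 1),
              q * (1 - q) ^ t * exitP G S m v := by
          apply Finset.sum_comm'
          intro t m
          simp only [Finset.mem_range, Finset.mem_Ico]
          omega
        have hDle : ∑ t ∈ Finset.range (L + 1), ∑ m ∈ Finset.range (t + 1),
              q * (1 - q) ^ t * exitP G S m v ≤ EL L v := by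
          rw [hswap, hEL]
          apply Finset.sum_le_sum
          intro m hm
          have hmL : m ≤ L + 1 := by
            rw [Finset.mem_range] at hm; omega
          have hinner : ∑ t ∈ Finset.Ico m (L + 1), q * (1 - q) ^ t * exitP G S m v
              = (q * ∑ t ∈ Finset.Ico m (L + 1), (1 - q) ^ t) * exitP G S m v := by
            rw [Finset.mul_sum, Finset.sum_mul]
          rw [hinner]
          apply mul_le_mul_of_nonneg_right _ (exitP_nonneg G S m v)
          have hIco : ∑ t ∈ Finset.Ico m (L + 1), (1 - q) ^ t
              = (1 - q) ^ m * ∑ j ∈ Finset.range (L + 1 - m), (1 - q) ^ j := by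
            rw [Finset.sum_Ico_eq_sum_range, Finset.mul_sum]
            apply Finset.sum_congr rfl
            intro j _
            rw [← pow_add]
          rw [hIco, ← mul_assoc, mul_comm q ((1 - q) ^ m), mul_assoc]
          have h6 : q * ∑ j ∈ Finset.range (L + 1 - m), (1 - q) ^ j ≤ 1 := by
            rw [geom_mul_eq]
            have : (0 : ℝ) ≤ (1 - q) ^ (L + 1 - m) := pow_nonneg hx0 _
            linarith
          calc (1 - q) ^ m * (q * ∑ j ∈ Finset.range (L + 1 - m), (1 - q) ^ j)
              ≤ (1 - q) ^ m * 1 := mul_le_mul_of_nonneg_left h6 (pow_nonneg hx0 m)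
            _ = (1 - q) ^ m := mul_one _
        have hELv := hvgood L
        calc 1 - (1 - q) ^ (L + 1) - ε ^ 2
            ≤ 1 - (1 - q) ^ (L + 1)
              - ∑ t ∈ Finset.range (L + 1), ∑ m ∈ Finset.range (t + 1),
                  q * (1 - q) ^ t * exitP G S m v := by
              have := le_trans hDle hELv
              linarith
          _ = ∑ t ∈ Finset.range (L + 1), q * (1 - q) ^ t * stay G S t v := by
              rw [hsum2]
          _ = ∑ l ∈ (Finset.range (L + 1)).biUnion (Lset (V := V)), gfun G S q v l :=
              hsum1.symm
          _ ≤ ∑' l : List V, gfun G S q v l := hpartial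
      -- take the limit L → ∞
      have hlim : Filter.Tendsto (fun L : ℕ => 1 - (1 - q) ^ (L + 1) - ε ^ 2)
          Filter.atTop (nhds (1 - 0 - ε ^ 2)) := by
        apply Filter.Tendsto.sub _ tendsto_const_nhds
        apply Filter.Tendsto.const_sub
        have hpow : Filter.Tendsto (fun L : ℕ => (1 - q) ^ L) Filter.atTop (nhds 0) :=
          tendsto_pow_atTop_nhds_zero_of_lt_one hx0 hx1
        exact hpow.comp (Filter.tendsto_add_atTop_nat 1)
      have hfinal : 1 - 0 - ε ^ 2 ≤ ∑' l : List V, gfun G S q v l :=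
        le_of_tendsto' hlim hL
      have hC1 : 1 ≤ 4 / δ ^ 2 := by
        rw [le_div_iff₀ (by positivity)]
        nlinarith
      have hε2 : (0 : ℝ) ≤ ε ^ 2 := sq_nonneg ε
      nlinarith
  · -- easy case: large ε
    push_neg at hcase
    refine ⟨S, le_refl _, ?_, ?_⟩
    · have hδ3 : δ ^ 3 ≤ 1 := pow_le_one₀ hδ0.le hδ1
      have hδ4 : δ ^ 4 ≤ δ := by nlinarith
      have h5 : δ ^ 4 * n ≤ δ * n := mul_le_mul_of_nonneg_right hδ4 hn0.le
      linarith
    · intro v _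
      have h1 : 1 - 4 / δ ^ 2 * ε ^ 2 ≤ 0 := by
        have h4 : (0 : ℝ) < δ ^ 2 := by positivity
        have h5 : (1 : ℝ) < 4 / δ ^ 2 * ε ^ 2 := by
          rw [div_mul_eq_mul_div, lt_div_iff₀ h4]
          nlinarith
        linarith
      have htsum_eq : (∑' l : List V,
          if l.head? = some v ∧ ∀ u ∈ l, u ∈ Vs i then
            chainProb G (θ * ε ^ 4 / Real.sqrt (Fintype.card V))
              (l.map some ++ [none]) else 0) = ∑' l : List V, gfun G S q v l := rfl
      rw [htsum_eq]
      have h0 : (0 : ℝ) ≤ ∑' l : List V, gfun G S q v l :=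
        tsum_nonneg fun l => gfun_nonneg G S q (le_of_lt hq0) hq1 v l
      linarith

end Paper
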